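/- For every real t ≥ 2 and k ∈ {1,2}, the value (4t/3)·cos((1/3)·arccos(1 − 27/(4t) + 27/(4t²)) − 2πk/3) − t/3 + 1 is at most 1. -/

import Mathlib

private lemma aux_c1 (c s q x : ℝ) (hs0 : 0 ≤ s) (hc : 1/2 ≤ c) (hs2 : s^2 = 1 - c^2)
    (hq : q^2 = 3) (hq0 : 0 ≤ q) (hx3 : 4*c^3 - 3*c = x) (hx : -(11/16) ≤ x) :
    c * -(1/2) + s * (q/2) ≤ 1/4 := by
  have hX : (1 - 4*c) * ((1 - 4*(c * -(1/2) + s * (q/2))) * (1 - 4*(c * -(1/2) - s * (q/2))))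
      = -16 * x - 11 := by
    linear_combination (-16 : ℝ) * hx3 + (-4*(1-4*c)*s^2) * hq + (-12*(1-4*c)) * hs2
  have hkey : -16 * x - 11 ≤ 0 := by linarith
  have h1 : 1 - 4*c ≤ -1 := by linarith
  have h2 : (2:ℝ) ≤ 1 - 4*(c * -(1/2) - s * (q/2)) := by
    nlinarith [mul_nonneg hs0 hq0]
  have hAB : 0 ≤ (1 - 4*(c * -(1/2) + s * (q/2))) * (1 - 4*(c * -(1/2) - s * (q/2))) := by
    by_contra h
    push_neg at h
    nlinarith
  nlinarith

/-- For `t ≥ 2` and `k ∈ {1,2}`, the root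
`(4t/3)·cos((1/3)·arccos(1 − 27/(4t) + 27/(4t²)) − 2πk/3) − t/3 + 1` is at most `1`. -/
theorem cubic_other_roots_le_one (t : ℝ) (ht : 2 ≤ t) (k : ℕ) (hk : k = 1 ∨ k = 2) :
    4 * t / 3 *
        Real.cos (1 / 3 * Real.arccos (1 - 27 / (4 * t) + 27 / (4 * t ^ 2))
          - 2 * Real.pi * (k : ℝ) / 3)
      - t / 3 + 1 ≤ 1 := by
  have ht0 : (0:ℝ) < t := by linarith
  have ht2 : (0:ℝ) < t ^ 2 := by positivity
  obtain ⟨x, hxdef⟩ : ∃ x : ℝ, 1 - 27 / (4 * t) + 27 / (4 * t ^ 2) = x := ⟨_, rfl⟩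
  rw [hxdef]
  have hx_eq : x = (4 * t ^ 2 - 27 * t + 27) / (4 * t ^ 2) := by
    rw [← hxdef]; field_simp
  have hx1 : x ≤ 1 := by
    rw [hx_eq, div_le_one (by positivity)]; nlinarith
  have hxm1 : -(11/16 : ℝ) ≤ x := by
    rw [hx_eq, le_div_iff₀ (by positivity)]; nlinarith [sq_nonneg (t - 2)]
  obtain ⟨θ, hθdef⟩ : ∃ θ : ℝ, Real.arccos x = θ := ⟨_, rfl⟩
  rw [hθdef]
  have hcosθ : Real.cos θ = x := by rw [← hθdef]; exact Real.cos_arccos (by linarith) hx1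
  have hθ0 : 0 ≤ θ := hθdef ▸ Real.arccos_nonneg x
  have hθπ : θ ≤ Real.pi := hθdef ▸ Real.arccos_le_pi x
  obtain ⟨c, hcdef⟩ : ∃ c : ℝ, Real.cos (θ / 3) = c := ⟨_, rfl⟩
  obtain ⟨s, hsdef⟩ : ∃ s : ℝ, Real.sin (θ / 3) = s := ⟨_, rfl⟩
  obtain ⟨q, hqdef⟩ : ∃ q : ℝ, Real.sqrt 3 = q := ⟨_, rfl⟩
  have hπ : (0:ℝ) < Real.pi := Real.pi_pos
  have hs0 : 0 ≤ s := hsdef ▸ Real.sin_nonneg_of_nonneg_of_le_pi (by linarith) (by linarith)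
  have hchalf : (1/2 : ℝ) ≤ c := by
    have h := Real.cos_le_cos_of_nonneg_of_le_pi (by linarith : 0 ≤ θ / 3)
      (by linarith : Real.pi / 3 ≤ Real.pi) (by linarith : θ / 3 ≤ Real.pi / 3)
    rw [Real.cos_pi_div_three, hcdef] at h
    exact h
  have hs2 : s ^ 2 = 1 - c ^ 2 := by
    have h := Real.sin_sq_add_cos_sq (θ / 3)
    rw [hcdef, hsdef] at h
    linarith
  have hx3 : 4 * c ^ 3 - 3 * c = x := by
    have h := Real.cos_three_mul (θ / 3)
    rw [show 3 * (θ / 3) = θ by ring, hcosθ, hcdef] at h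
    linarith
  have hq : q ^ 2 = 3 := by rw [← hqdef]; exact Real.sq_sqrt (by norm_num)
  have hq0 : 0 ≤ q := hqdef ▸ Real.sqrt_nonneg 3
  have hc23 : Real.cos (2 * Real.pi / 3) = -(1/2) := by
    rw [show 2 * Real.pi / 3 = Real.pi - Real.pi / 3 by ring, Real.cos_pi_sub,
      Real.cos_pi_div_three]
  have hs23 : Real.sin (2 * Real.pi / 3) = q / 2 := by
    rw [show 2 * Real.pi / 3 = Real.pi - Real.pi / 3 by ring, Real.sin_pi_sub,
      Real.sin_pi_div_three, hqdef]
  have hc43 : Real.cos (4 * Real.pi / 3) = -(1/2) := by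
    rw [show 4 * Real.pi / 3 = Real.pi / 3 + Real.pi by ring, Real.cos_add_pi,
      Real.cos_pi_div_three]
  have hs43 : Real.sin (4 * Real.pi / 3) = -(q / 2) := by
    rw [show 4 * Real.pi / 3 = Real.pi / 3 + Real.pi by ring, Real.sin_add_pi,
      Real.sin_pi_div_three, hqdef]
  rcases hk with hk | hk <;> subst hk
  · -- k = 1
    rw [show 1 / 3 * θ - 2 * Real.pi * ((1:ℕ) : ℝ) / 3 = θ / 3 - 2 * Real.pi / 3 by
        push_cast; ring,
      Real.cos_sub, hc23, hs23, hcdef, hsdef]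
    have hc1le : c * -(1/2) + s * (q/2) ≤ 1/4 :=
      aux_c1 c s q x hs0 hchalf hs2 hq hq0 hx3 hxm1
    nlinarith
  · -- k = 2
    rw [show 1 / 3 * θ - 2 * Real.pi * ((2:ℕ) : ℝ) / 3 = θ / 3 - 4 * Real.pi / 3 by
        push_cast; ring,
      Real.cos_sub, hc43, hs43, hcdef, hsdef]
    have hle : c * -(1/2) + s * -(q / 2) ≤ 1/4 := by
      nlinarith [mul_nonneg hs0 hq0]
    nlinarith
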